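/- For every integer n, the Abramowitz function J_n, i.e. the function z ↦ ∫_0^∞ t^n · exp(−t² − z/t) dt, is analytic (holomorphic) on the open right half-plane {z ∈ ℂ : Re(z) > 0}. -/

import Mathlib

open MeasureTheory

section Aux
open Real Set

lemma abram_integrable (m : ℤ) {c : ℝ} (hc : 0 < c) :
    IntegrableOn (fun t : ℝ => t ^ m * Real.exp (-t ^ 2 - c / t)) (Set.Ioi 0) := by
  have hcont : ContinuousOn (fun t : ℝ => t ^ m * Real.exp (-t ^ 2 - c / t)) (Set.Ioi 0) := by
    apply ContinuousOn.mul
    · exact fun t ht => (continuousAt_zpow₀ t m (Or.inl (ne_of_gt ht))).continuousWithinAt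
    · exact Real.continuous_exp.comp_continuousOn
        (((continuous_neg.comp (continuous_pow 2)).continuousOn).sub
          (continuousOn_const.div continuousOn_id fun t ht => ne_of_gt ht))
  have h01 : IntegrableOn (fun t : ℝ => t ^ m * Real.exp (-t ^ 2 - c / t)) (Set.Ioc 0 1) := by
    set k : ℕ := (-m).toNat with hk
    have hmk : -(k : ℤ) ≤ m := by omega
    refine Integrable.mono' (g := fun _ => (k.factorial : ℝ) / c ^ k)
      (integrableOn_const measure_Ioc_lt_top.ne)
      ((hcont.mono Ioc_subset_Ioi_self).aestronglyMeasurable measurableSet_Ioc) ?_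
    · filter_upwards [ae_restrict_mem measurableSet_Ioc] with t ht
      obtain ⟨ht0, ht1⟩ := ht
      have h1 : t ^ m ≤ t ^ (-(k:ℤ)) := zpow_le_zpow_right_of_le_one₀ ht0 ht1 hmk
      have h2 : Real.exp (-t ^ 2 - c / t) ≤ Real.exp (-(c / t)) := by
        apply Real.exp_le_exp.2; nlinarith
      have h3 : Real.exp (-(c / t)) ≤ (k.factorial : ℝ) * t ^ k / c ^ k := by
        have hle := Real.pow_div_factorial_le_exp (x := c / t) (div_pos hc ht0).le k
        have hp : (0:ℝ) < (c / t) ^ k / (k.factorial : ℝ) := by positivity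
        calc Real.exp (-(c / t)) = (Real.exp (c / t))⁻¹ := Real.exp_neg _
          _ ≤ ((c / t) ^ k / (k.factorial : ℝ))⁻¹ := by
              exact inv_anti₀ hp hle
          _ = (k.factorial : ℝ) * t ^ k / c ^ k := by
              rw [div_pow]
              field_simp
      have h4 : (0:ℝ) < t ^ k := pow_pos ht0 k
      calc ‖t ^ m * Real.exp (-t ^ 2 - c / t)‖
          = t ^ m * Real.exp (-t ^ 2 - c / t) := by
            rw [Real.norm_eq_abs, abs_of_nonneg (by positivity)]
        _ ≤ t ^ (-(k:ℤ)) * ((k.factorial : ℝ) * t ^ k / c ^ k) := by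
            apply mul_le_mul h1 (h2.trans h3) (Real.exp_pos _).le (zpow_nonneg ht0.le _)
        _ = (k.factorial : ℝ) / c ^ k := by
            rw [zpow_neg, zpow_natCast]
            field_simp
  have h1i : IntegrableOn (fun t : ℝ => t ^ m * Real.exp (-t ^ 2 - c / t)) (Set.Ioi 1) := by
    set K : ℕ := m.toNat with hK
    have hmK : m ≤ (K : ℤ) := by omega
    refine Integrable.mono'
      (((integrableOn_rpow_mul_exp_neg_mul_sq one_pos
        (lt_of_lt_of_le neg_one_lt_zero (Nat.cast_nonneg K) : (-1:ℝ) < (K:ℝ))).mono_set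
          (Ioi_subset_Ioi zero_le_one)))
      ((hcont.mono (Ioi_subset_Ioi zero_le_one)).aestronglyMeasurable measurableSet_Ioi) ?_
    filter_upwards [ae_restrict_mem measurableSet_Ioi] with t ht
    have ht0 : (0:ℝ) < t := lt_trans zero_lt_one ht
    have h1 : t ^ m ≤ t ^ (K:ℤ) := zpow_le_zpow_right₀ ht.le hmK
    have h2 : Real.exp (-t ^ 2 - c / t) ≤ Real.exp (-1 * t ^ 2) := by
      apply Real.exp_le_exp.2
      have : 0 < c / t := div_pos hc ht0
      nlinarith
    calc ‖t ^ m * Real.exp (-t ^ 2 - c / t)‖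
        = t ^ m * Real.exp (-t ^ 2 - c / t) := by
          rw [Real.norm_eq_abs, abs_of_nonneg (by positivity)]
      _ ≤ t ^ (K:ℤ) * Real.exp (-1 * t ^ 2) :=
          mul_le_mul h1 h2 (Real.exp_pos _).le (zpow_nonneg ht0.le _)
      _ = t ^ (K:ℝ) * Real.exp (-1 * t ^ 2) := by
          rw [zpow_natCast, Real.rpow_natCast]
  rw [← Set.Ioc_union_Ioi_eq_Ioi (zero_le_one : (0:ℝ) ≤ 1)]
  exact h01.union h1i

lemma abram_norm (m : ℤ) (z : ℂ) {t : ℝ} (ht : 0 < t) :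
    ‖((t ^ m : ℝ) : ℂ) * Complex.exp (-(t : ℂ) ^ 2 - z / (t : ℂ))‖
      = t ^ m * Real.exp (-t ^ 2 - z.re / t) := by
  rw [norm_mul, Complex.norm_exp, Complex.norm_real, Real.norm_eq_abs,
    abs_of_pos (zpow_pos ht m)]
  congr 2
  simp [Complex.sub_re, Complex.neg_re, Complex.div_ofReal_re, ← Complex.ofReal_pow]

end Aux

/-- The Abramowitz function `J_n`. -/
noncomputable def abramowitzJ (n : ℤ) (z : ℂ) : ℂ :=
  ∫ t in Set.Ioi (0 : ℝ), ((t ^ n : ℝ) : ℂ) * Complex.exp (-(t : ℂ) ^ 2 - z / (t : ℂ))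

theorem abramowitzJ_analyticOnNhd (n : ℤ) :
    AnalyticOnNhd ℂ (abramowitzJ n) {z : ℂ | 0 < z.re} := by
  have hopen : IsOpen {z : ℂ | 0 < z.re} := isOpen_lt continuous_const Complex.continuous_re
  refine DifferentiableOn.analyticOnNhd (fun z₀ hz₀ => ?_) hopen
  have hz₀re : 0 < z₀.re := hz₀
  set c : ℝ := z₀.re / 2 with hc
  have hcpos : 0 < c := by positivity
  set F : ℂ → ℝ → ℂ := fun z t => ((t ^ n : ℝ) : ℂ) * Complex.exp (-(t : ℂ) ^ 2 - z / (t : ℂ))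
    with hF
  set F' : ℂ → ℝ → ℂ := fun z t =>
    ((t ^ n : ℝ) : ℂ) * (Complex.exp (-(t : ℂ) ^ 2 - z / (t : ℂ)) * (-(1 / (t : ℂ)))) with hF'
  have hcont_exp : ∀ z : ℂ, ContinuousOn
      (fun t : ℝ => Complex.exp (-(t : ℂ) ^ 2 - z / (t : ℂ))) (Set.Ioi 0) := by
    intro z
    apply Complex.continuous_exp.comp_continuousOn
    apply ContinuousOn.sub
    · exact ((Complex.continuous_ofReal.pow 2).neg).continuousOn
    · exact continuousOn_const.div Complex.continuous_ofReal.continuousOn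
        fun t ht => Complex.ofReal_ne_zero.2 (ne_of_gt ht)
  have hcont_pow : ContinuousOn (fun t : ℝ => ((t ^ n : ℝ) : ℂ)) (Set.Ioi 0) :=
    Complex.continuous_ofReal.comp_continuousOn
      fun t ht => (continuousAt_zpow₀ t n (Or.inl (ne_of_gt ht))).continuousWithinAt
  have meas : ∀ z : ℂ, AEStronglyMeasurable (F z) (volume.restrict (Set.Ioi 0)) := fun z =>
    (hcont_pow.mul (hcont_exp z)).aestronglyMeasurable measurableSet_Ioi
  have meas' : AEStronglyMeasurable (F' z₀) (volume.restrict (Set.Ioi 0)) := by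
    refine (hcont_pow.mul ((hcont_exp z₀).mul ?_)).aestronglyMeasurable measurableSet_Ioi
    exact (continuousOn_const.div Complex.continuous_ofReal.continuousOn
      fun t ht => Complex.ofReal_ne_zero.2 (ne_of_gt ht)).neg
  have hre : ∀ z ∈ Metric.ball z₀ c, c ≤ z.re := by
    intro z hz
    have h1 : |(z - z₀).re| ≤ ‖z - z₀‖ := Complex.abs_re_le_norm _
    have h2 : ‖z - z₀‖ < c := by
      rwa [← dist_eq_norm, ← Metric.mem_ball]
    have := (abs_lt.mp (lt_of_le_of_lt h1 h2)).1
    simp only [Complex.sub_re] at this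
    simp only [hc] at *
    linarith
  have hexp_le : ∀ {t : ℝ}, 0 < t → ∀ {r : ℝ}, c ≤ r →
      Real.exp (-t ^ 2 - r / t) ≤ Real.exp (-t ^ 2 - c / t) := by
    intro t ht r hr
    apply Real.exp_le_exp.2
    have h : c / t ≤ r / t := by gcongr
    linarith
  have hF_int : Integrable (F z₀) (volume.restrict (Set.Ioi 0)) := by
    refine Integrable.mono' (abram_integrable n hcpos) (meas z₀) ?_
    filter_upwards [ae_restrict_mem measurableSet_Ioi] with t ht
    rw [hF, abram_norm n z₀ ht]
    exact mul_le_mul_of_nonneg_left (hexp_le ht (by rw [hc]; linarith)) (zpow_nonneg ht.le _)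
  have h_bound : ∀ᵐ t ∂(volume.restrict (Set.Ioi 0)), ∀ z ∈ Metric.ball z₀ c,
      ‖F' z t‖ ≤ t ^ (n - 1) * Real.exp (-t ^ 2 - c / t) := by
    filter_upwards [ae_restrict_mem measurableSet_Ioi] with t ht z hz
    have htpos : (0:ℝ) < t := ht
    have hnorm : ‖F' z t‖ = t ^ n * Real.exp (-t ^ 2 - z.re / t) * (1 / t) := by
      show ‖((t ^ n : ℝ) : ℂ) * (Complex.exp (-(t : ℂ) ^ 2 - z / (t : ℂ)) * (-(1 / (t : ℂ))))‖
        = _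
      rw [← mul_assoc, norm_mul]
      rw [show ((t ^ n : ℝ) : ℂ) * Complex.exp (-(t : ℂ) ^ 2 - z / (t : ℂ))
        = F z t from rfl, hF, abram_norm n z ht]
      congr 1
      rw [norm_neg, norm_div, norm_one, Complex.norm_real, Real.norm_eq_abs,
        abs_of_pos htpos]
    rw [hnorm, mul_comm (t ^ n * _) _, ← mul_assoc]
    have : 1 / t * t ^ n = t ^ (n - 1) := by
      rw [zpow_sub_one₀ (ne_of_gt htpos), one_div, mul_comm]
    rw [this]
    exact mul_le_mul_of_nonneg_left (hexp_le ht (hre z hz)) (zpow_nonneg htpos.le _)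
  have h_diff : ∀ᵐ t ∂(volume.restrict (Set.Ioi 0)), ∀ z ∈ Metric.ball z₀ c,
      HasDerivAt (fun z => F z t) (F' z t) z := by
    filter_upwards [ae_restrict_mem measurableSet_Ioi] with t ht z hz
    have h1 : HasDerivAt (fun z : ℂ => -(t : ℂ) ^ 2 - z / (t : ℂ)) (-(1 / (t : ℂ))) z := by
      simpa using (HasDerivAt.const_sub (-(t : ℂ) ^ 2) ((hasDerivAt_id z).div_const (t : ℂ)))
    exact (h1.cexp).const_mul _
  have key := hasDerivAt_integral_of_dominated_loc_of_deriv_le (Metric.ball_mem_nhds z₀ hcpos)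
    (Filter.Eventually.of_forall meas) hF_int meas' h_bound
    (abram_integrable (n - 1) hcpos) h_diff
  exact key.2.differentiableAt.differentiableWithinAt
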